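/- arXiv:1402.6048 — 4 statements merged into one kernel-verified Lean document; each statement's English description precedes it below -/
import Mathlib

section
/- For every integer s ≥ 5 and every nonnegative integer c with c ≤ (s² − 5s)/4, there exist nonnegative integers a₁, a₂, …, a_s such that a₁ + a₂ + ⋯ + a_s = s and a₁² + a₂² + ⋯ + a_s² = s + 2c. -/
def tbl : ℕ → ℕ → List ℕ
  | 6, 1 => [2]
  | 7, 2 => [2, 2]
  | 7, 3 => [3]
  | 8, 4 => [2, 3]
  | 8, 5 => [2, 2, 3]
  | 8, 6 => [4]
  | 9, 7 => [2, 4]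
  | 9, 8 => [2, 2, 4]
  | 9, 9 => [3, 4]
  | 10, 10 => [5]
  | 10, 11 => [2, 5]
  | 10, 12 => [4, 4]
  | 11, 13 => [3, 5]
  | 11, 14 => [2, 3, 5]
  | 11, 15 => [6]
  | 11, 16 => [2, 6]
  | 12, 17 => [2, 2, 6]
  | 12, 18 => [3, 6]
  | 12, 19 => [2, 3, 6]
  | 12, 20 => [5, 5]
  | 12, 21 => [7]
  | 13, 22 => [2, 7]
  | 13, 23 => [2, 2, 7]
  | 13, 24 => [3, 7]
  | 13, 25 => [5, 6]
  | 13, 26 => [2, 5, 6]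
  | 14, 27 => [4, 7]
  | 14, 28 => [8]
  | 14, 29 => [2, 8]
  | 14, 30 => [2, 2, 8]
  | 14, 31 => [3, 8]
  | 15, 32 => [2, 3, 8]
  | 15, 33 => [2, 2, 3, 8]
  | 15, 34 => [4, 8]
  | 15, 35 => [2, 4, 8]
  | 15, 36 => [9]
  | 15, 37 => [2, 9]
  | 16, 38 => [2, 2, 9]
  | 16, 39 => [3, 9]
  | 16, 40 => [2, 3, 9]
  | 16, 41 => [2, 2, 3, 9]
  | 16, 42 => [4, 9]
  | 16, 43 => [6, 8]
  | 16, 44 => [2, 6, 8]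
  | 17, 45 => [10]
  | 17, 46 => [2, 10]
  | 17, 47 => [2, 2, 10]
  | 17, 48 => [3, 10]
  | 17, 49 => [2, 3, 10]
  | 17, 50 => [2, 2, 3, 10]
  | 17, 51 => [4, 10]
  | 18, 52 => [2, 4, 10]
  | 18, 53 => [2, 2, 4, 10]
  | 18, 54 => [3, 4, 10]
  | 18, 55 => [11]
  | 18, 56 => [2, 11]
  | 18, 57 => [2, 2, 11]
  | 18, 58 => [3, 11]
  | 19, 59 => [2, 3, 11]
  | 19, 60 => [6, 10]
  | 19, 61 => [4, 11]
  | 19, 62 => [2, 4, 11]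
  | 19, 63 => [2, 2, 4, 11]
  | 19, 64 => [8, 9]
  | 19, 65 => [5, 11]
  | 19, 66 => [12]
  | 20, 67 => [2, 12]
  | 20, 68 => [2, 2, 12]
  | 20, 69 => [3, 12]
  | 20, 70 => [2, 3, 12]
  | 20, 71 => [2, 2, 3, 12]
  | 20, 72 => [4, 12]
  | 20, 73 => [2, 4, 12]
  | 20, 74 => [2, 2, 4, 12]
  | 20, 75 => [3, 4, 12]
  | 21, 76 => [5, 12]
  | 21, 77 => [2, 5, 12]
  | 21, 78 => [13]
  | 21, 79 => [2, 13]
  | 21, 80 => [2, 2, 13]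
  | 21, 81 => [3, 13]
  | 21, 82 => [2, 3, 13]
  | 21, 83 => [8, 11]
  | 21, 84 => [4, 13]
  | 22, 85 => [2, 4, 13]
  | 22, 86 => [2, 2, 4, 13]
  | 22, 87 => [7, 12]
  | 22, 88 => [5, 13]
  | 22, 89 => [2, 5, 13]
  | 22, 90 => [10, 10]
  | 22, 91 => [14]
  | 22, 92 => [2, 14]
  | 22, 93 => [2, 2, 14]
  | 23, 94 => [3, 14]
  | 23, 95 => [2, 3, 14]
  | 23, 96 => [2, 2, 3, 14]
  | 23, 97 => [4, 14]
  | 23, 98 => [2, 4, 14]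
  | 23, 99 => [7, 13]
  | 23, 100 => [3, 4, 14]
  | 23, 101 => [5, 14]
  | 23, 102 => [2, 5, 14]
  | 23, 103 => [4, 4, 14]
  | 24, 104 => [3, 5, 14]
  | 24, 105 => [15]
  | 24, 106 => [2, 15]
  | 24, 107 => [2, 2, 15]
  | 24, 108 => [3, 15]
  | 24, 109 => [2, 3, 15]
  | 24, 110 => [2, 2, 3, 15]
  | 24, 111 => [4, 15]
  | 24, 112 => [2, 4, 15]
  | 24, 113 => [2, 2, 4, 15]
  | 24, 114 => [3, 4, 15]
  | 25, 115 => [5, 15]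
  | 25, 116 => [2, 5, 15]
  | 25, 117 => [4, 4, 15]
  | 25, 118 => [3, 5, 15]
  | 25, 119 => [8, 14]
  | 25, 120 => [16]
  | 25, 121 => [2, 16]
  | 25, 122 => [2, 2, 16]
  | 25, 123 => [3, 16]
  | 25, 124 => [2, 3, 16]
  | 25, 125 => [2, 2, 3, 16]
  | 26, 126 => [4, 16]
  | 26, 127 => [2, 4, 16]
  | 26, 128 => [2, 2, 4, 16]
  | 26, 129 => [3, 4, 16]
  | 26, 130 => [5, 16]
  | 26, 131 => [2, 5, 16]
  | 26, 132 => [4, 4, 16]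
  | 26, 133 => [8, 15]
  | 26, 134 => [2, 8, 15]
  | 26, 135 => [6, 16]
  | 26, 136 => [17]
  | 27, 137 => [2, 17]
  | 27, 138 => [2, 2, 17]
  | 27, 139 => [3, 17]
  | 27, 140 => [2, 3, 17]
  | 27, 141 => [7, 16]
  | 27, 142 => [4, 17]
  | 27, 143 => [2, 4, 17]
  | 27, 144 => [2, 2, 4, 17]
  | 27, 145 => [3, 4, 17]
  | 27, 146 => [5, 17]
  | 27, 147 => [2, 5, 17]
  | 27, 148 => [8, 16]
  | 28, 149 => [3, 5, 17]
  | 28, 150 => [10, 15]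
  | 28, 151 => [6, 17]
  | 28, 152 => [2, 6, 17]
  | 28, 153 => [18]
  | 28, 154 => [2, 18]
  | 28, 155 => [2, 2, 18]
  | 28, 156 => [3, 18]
  | 28, 157 => [2, 3, 18]
  | 28, 158 => [2, 2, 3, 18]
  | 28, 159 => [4, 18]
  | 28, 160 => [2, 4, 18]
  | 28, 161 => [2, 2, 4, 18]
  | 29, 162 => [3, 4, 18]
  | 29, 163 => [5, 18]
  | 29, 164 => [2, 5, 18]
  | 29, 165 => [4, 4, 18]
  | 29, 166 => [3, 5, 18]
  | 29, 167 => [2, 3, 5, 18]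
  | 29, 168 => [6, 18]
  | 29, 169 => [2, 6, 18]
  | 29, 170 => [2, 2, 6, 18]
  | 29, 171 => [19]
  | 29, 172 => [2, 19]
  | 29, 173 => [2, 2, 19]
  | 29, 174 => [3, 19]
  | 30, 175 => [2, 3, 19]
  | 30, 176 => [2, 2, 3, 19]
  | 30, 177 => [4, 19]
  | 30, 178 => [2, 4, 19]
  | 30, 179 => [2, 2, 4, 19]
  | 30, 180 => [3, 4, 19]
  | 30, 181 => [5, 19]
  | 30, 182 => [2, 5, 19]
  | 30, 183 => [4, 4, 19]
  | 30, 184 => [3, 5, 19]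
  | 30, 185 => [2, 3, 5, 19]
  | 30, 186 => [6, 19]
  | 30, 187 => [2, 6, 19]
  | 31, 188 => [2, 2, 6, 19]
  | 31, 189 => [9, 18]
  | 31, 190 => [20]
  | 31, 191 => [2, 20]
  | 31, 192 => [2, 2, 20]
  | 31, 193 => [3, 20]
  | 31, 194 => [2, 3, 20]
  | 31, 195 => [2, 2, 3, 20]
  | 31, 196 => [4, 20]
  | 31, 197 => [2, 4, 20]
  | 31, 198 => [2, 2, 4, 20]
  | 31, 199 => [3, 4, 20]
  | 31, 200 => [5, 20]
  | 31, 201 => [2, 5, 20]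
  | 32, 202 => [4, 4, 20]
  | 32, 203 => [3, 5, 20]
  | 32, 204 => [2, 3, 5, 20]
  | 32, 205 => [6, 20]
  | 32, 206 => [2, 6, 20]
  | 32, 207 => [9, 19]
  | 32, 208 => [3, 6, 20]
  | 32, 209 => [2, 3, 6, 20]
  | 32, 210 => [21]
  | 32, 211 => [2, 21]
  | 32, 212 => [2, 2, 21]
  | 32, 213 => [3, 21]
  | 32, 214 => [2, 3, 21]
  | 32, 215 => [2, 2, 3, 21]
  | 32, 216 => [4, 21]
  | 33, 217 => [2, 4, 21]
  | 33, 218 => [8, 20]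
  | 33, 219 => [3, 4, 21]
  | 33, 220 => [5, 21]
  | 33, 221 => [2, 5, 21]
  | 33, 222 => [4, 4, 21]
  | 33, 223 => [3, 5, 21]
  | 33, 224 => [2, 3, 5, 21]
  | 33, 225 => [6, 21]
  | 33, 226 => [2, 6, 21]
  | 33, 227 => [2, 2, 6, 21]
  | 33, 228 => [3, 6, 21]
  | 33, 229 => [2, 3, 6, 21]
  | 33, 230 => [5, 5, 21]
  | 33, 231 => [22]
  | 34, 232 => [2, 22]
  | 34, 233 => [2, 2, 22]
  | 34, 234 => [3, 22]
  | 34, 235 => [2, 3, 22]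
  | 34, 236 => [2, 2, 3, 22]
  | 34, 237 => [4, 22]
  | 34, 238 => [2, 4, 22]
  | 34, 239 => [2, 2, 4, 22]
  | 34, 240 => [3, 4, 22]
  | 34, 241 => [5, 22]
  | 34, 242 => [2, 5, 22]
  | 34, 243 => [4, 4, 22]
  | 34, 244 => [3, 5, 22]
  | 34, 245 => [11, 20]
  | 34, 246 => [6, 22]
  | 35, 247 => [2, 6, 22]
  | 35, 248 => [2, 2, 6, 22]
  | 35, 249 => [3, 6, 22]
  | 35, 250 => [2, 3, 6, 22]
  | 35, 251 => [5, 5, 22]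
  | 35, 252 => [7, 22]
  | 35, 253 => [23]
  | 35, 254 => [2, 23]
  | 35, 255 => [2, 2, 23]
  | 35, 256 => [3, 23]
  | 35, 257 => [2, 3, 23]
  | 35, 258 => [2, 2, 3, 23]
  | 35, 259 => [4, 23]
  | 35, 260 => [2, 4, 23]
  | 35, 261 => [2, 2, 4, 23]
  | 35, 262 => [3, 4, 23]
  | 36, 263 => [5, 23]
  | 36, 264 => [2, 5, 23]
  | 36, 265 => [4, 4, 23]
  | 36, 266 => [3, 5, 23]
  | 36, 267 => [9, 22]
  | 36, 268 => [6, 23]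
  | 36, 269 => [2, 6, 23]
  | 36, 270 => [2, 2, 6, 23]
  | 36, 271 => [3, 6, 23]
  | 36, 272 => [2, 3, 6, 23]
  | 36, 273 => [5, 5, 23]
  | 36, 274 => [7, 23]
  | 36, 275 => [2, 7, 23]
  | 36, 276 => [24]
  | 36, 277 => [2, 24]
  | 36, 278 => [2, 2, 24]
  | 36, 279 => [3, 24]
  | 37, 280 => [2, 3, 24]
  | 37, 281 => [2, 2, 3, 24]
  | 37, 282 => [4, 24]
  | 37, 283 => [2, 4, 24]
  | 37, 284 => [2, 2, 4, 24]
  | 37, 285 => [3, 4, 24]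
  | 37, 286 => [5, 24]
  | 37, 287 => [2, 5, 24]
  | 37, 288 => [4, 4, 24]
  | 37, 289 => [3, 5, 24]
  | 37, 290 => [2, 3, 5, 24]
  | 37, 291 => [6, 24]
  | 37, 292 => [2, 6, 24]
  | 37, 293 => [2, 2, 6, 24]
  | 37, 294 => [3, 6, 24]
  | 37, 295 => [2, 3, 6, 24]
  | 37, 296 => [5, 5, 24]
  | 38, 297 => [7, 24]
  | 38, 298 => [2, 7, 24]
  | 38, 299 => [2, 2, 7, 24]
  | 38, 300 => [25]
  | 38, 301 => [2, 25]
  | 38, 302 => [2, 2, 25]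
  | 38, 303 => [3, 25]
  | 38, 304 => [2, 3, 25]
  | 38, 305 => [2, 2, 3, 25]
  | 38, 306 => [4, 25]
  | 38, 307 => [2, 4, 25]
  | 38, 308 => [2, 2, 4, 25]
  | 38, 309 => [3, 4, 25]
  | 38, 310 => [5, 25]
  | 38, 311 => [2, 5, 25]
  | 38, 312 => [4, 4, 25]
  | 38, 313 => [3, 5, 25]
  | 39, 314 => [2, 3, 5, 25]
  | 39, 315 => [6, 25]
  | 39, 316 => [2, 6, 25]
  | 39, 317 => [2, 2, 6, 25]
  | 39, 318 => [3, 6, 25]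
  | 39, 319 => [12, 23]
  | 39, 320 => [5, 5, 25]
  | 39, 321 => [7, 25]
  | 39, 322 => [2, 7, 25]
  | 39, 323 => [2, 2, 7, 25]
  | 39, 324 => [3, 7, 25]
  | 39, 325 => [26]
  | 39, 326 => [2, 26]
  | 39, 327 => [2, 2, 26]
  | 39, 328 => [3, 26]
  | 39, 329 => [2, 3, 26]
  | 39, 330 => [2, 2, 3, 26]
  | 39, 331 => [4, 26]
  | 40, 332 => [2, 4, 26]
  | 40, 333 => [2, 2, 4, 26]
  | 40, 334 => [3, 4, 26]
  | 40, 335 => [5, 26]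
  | 40, 336 => [2, 5, 26]
  | 40, 337 => [4, 4, 26]
  | 40, 338 => [3, 5, 26]
  | 40, 339 => [2, 3, 5, 26]
  | 40, 340 => [6, 26]
  | 40, 341 => [2, 6, 26]
  | 40, 342 => [2, 2, 6, 26]
  | 40, 343 => [3, 6, 26]
  | 40, 344 => [2, 3, 6, 26]
  | 40, 345 => [10, 25]
  | 40, 346 => [7, 26]
  | 40, 347 => [2, 7, 26]
  | 40, 348 => [2, 2, 7, 26]
  | 40, 349 => [3, 7, 26]
  | 40, 350 => [5, 6, 26]
  | 41, 351 => [27]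
  | 41, 352 => [2, 27]
  | 41, 353 => [2, 2, 27]
  | 41, 354 => [3, 27]
  | 41, 355 => [2, 3, 27]
  | 41, 356 => [2, 2, 3, 27]
  | 41, 357 => [4, 27]
  | 41, 358 => [2, 4, 27]
  | 41, 359 => [2, 2, 4, 27]
  | 41, 360 => [3, 4, 27]
  | 41, 361 => [5, 27]
  | 41, 362 => [2, 5, 27]
  | 41, 363 => [4, 4, 27]
  | 41, 364 => [3, 5, 27]
  | 41, 365 => [2, 3, 5, 27]
  | 41, 366 => [6, 27]
  | 41, 367 => [2, 6, 27]
  | 41, 368 => [2, 2, 6, 27]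
  | 41, 369 => [3, 6, 27]
  | _, _ => []


set_option maxRecDepth 8000 in
theorem tbl_ok : ∀ s < 42, ∀ c < 370,
    ((s-1)*(s-6) < 4*c ∧ 4*c ≤ s*(s-5)) →
    (∀ k ∈ tbl s c, 2 ≤ k) ∧ ((tbl s c).map (fun k => k*(k-1)/2)).sum = c ∧ (tbl s c).sum ≤ s := by
  decide

theorem two_tri (k : ℕ) : 2 * (k*(k-1)/2) = k*(k-1) := by
  have h2 : 2 ∣ k*(k-1) := by
    rcases Nat.even_or_odd k with h | h
    · exact Dvd.dvd.mul_right h.two_dvd _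
    · refine Dvd.dvd.mul_left ?_ _
      obtain ⟨m, rfl⟩ := h
      simp
  rw [mul_comm]
  exact Nat.div_mul_cancel h2

theorem decomp : ∀ s c : ℕ, 4*c ≤ s*(s-5) →
    ∃ l : List ℕ, (∀ k ∈ l, 2 ≤ k) ∧ (l.map (fun k => k*(k-1)/2)).sum = c ∧ l.sum ≤ s := by
  intro s
  induction s using Nat.strong_induction_on with
  | _ s ih =>
    intro c hc
    rcases Nat.eq_zero_or_pos c with rfl | hc1
    · exact ⟨[], by simp, by simp, by simp⟩
    have hs6 : 6 ≤ s := by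
      by_contra h
      push_neg at h
      interval_cases s <;> omega
    by_cases hstep : 4*c ≤ (s-1)*((s-1)-5)
    · obtain ⟨l, h1, h2, h3⟩ := ih (s-1) (by omega) c hstep
      exact ⟨l, h1, h2, by omega⟩
    push_neg at hstep
    have hmargin : (s-1)*(s-6) < 4*c := by
      have e : s - 1 - 5 = s - 6 := by omega
      rwa [e] at hstep
    by_cases hs41 : s ≤ 41
    · have hc369 : c < 370 := by
        have h1 : s*(s-5) ≤ 41*36 := Nat.mul_le_mul (by omega) (by omega)
        omega
      have := tbl_ok s (by omega) c hc369 ⟨hmargin, hc⟩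
      exact ⟨tbl s c, this.1, this.2.1, this.2.2⟩
    push_neg at hs41
    -- general step: k = (2s-1)/3
    set k := (2*s-1)/3 with hk
    have hk3 : 3*k ≤ 2*s-1 ∧ 2*s-1 < 3*k+3 := by omega
    have hk2 : 2 ≤ k := by omega
    have hks : k + 15 ≤ s := by omega
    set t := k*(k-1)/2 with ht
    have htri : 2 * t = k*(k-1) := two_tri k
    -- integer versions
    have hZtri : 2 * (t:ℤ) = (k:ℤ) * ((k:ℤ)-1) := by
      have := congrArg (Nat.cast : ℕ → ℤ) htri
      push_cast [Nat.cast_sub (by omega : 1 ≤ k)] at this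
      linarith
    have hZk1 : 3*(k:ℤ) ≤ 2*(s:ℤ) - 1 := by omega
    have hZk2 : 2*(s:ℤ) ≤ 3*(k:ℤ) + 3 := by omega
    have hZs : (42:ℤ) ≤ (s:ℤ) := by exact_mod_cast hs41
    have hZmargin : ((s:ℤ)-1)*((s:ℤ)-6) < 4*(c:ℤ) := by
      have := hmargin
      zify [(by omega : 1 ≤ s), (by omega : 6 ≤ s)] at this
      linarith
    have hZc : 4*(c:ℤ) ≤ (s:ℤ)*((s:ℤ)-5) := by
      have := hc
      zify [(by omega : 5 ≤ s)] at this
      linarith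
    have htc : t ≤ c := by
      have : (t:ℤ) ≤ (c:ℤ) := by
        nlinarith [mul_nonneg (by linarith : (0:ℤ) ≤ (s:ℤ)-42) (by linarith : (0:ℤ) ≤ (s:ℤ)-1)]
      exact_mod_cast this
    have hrec : 4*(c - t) ≤ (s-k)*((s-k)-5) := by
      zify [htc, (by omega : k ≤ s), (by omega : 5 ≤ s - k)]
      nlinarith [mul_nonneg (by exact_mod_cast Nat.zero_le k : (0:ℤ) ≤ (k:ℤ)) (by linarith : (0:ℤ) ≤ 3*(k:ℤ) + 3 - 2*(s:ℤ))]
    obtain ⟨l, h1, h2, h3⟩ := ih (s-k) (by omega) _ hrec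
    refine ⟨k :: l, ?_, ?_, ?_⟩
    · intro x hx
      rcases List.mem_cons.mp hx with rfl | hx
      · exact hk2
      · exact h1 x hx
    · simp only [List.map_cons, List.sum_cons, h2, ← ht]
      omega
    · simp only [List.sum_cons]
      omega

theorem buildL : ∀ (l : List ℕ) (s : ℕ), (∀ k ∈ l, 2 ≤ k) → l.sum ≤ s →
    ∃ L : List ℕ, L.length = s ∧ L.sum = s ∧
      (L.map (fun x => x^2)).sum = s + 2 * (l.map (fun k => k*(k-1)/2)).sum := by
  intro l
  induction l with
  | nil =>
    intro s _ _
    exact ⟨List.replicate s 1, by simp, by simp, by simp⟩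
  | cons k l ih =>
    intro s hk hsum
    simp only [List.sum_cons] at hsum
    have hk2 : 2 ≤ k := hk k (List.mem_cons_self (a := k) (l := l))
    obtain ⟨L, h1, h2, h3⟩ := ih (s - k) (fun x hx => hk x (List.mem_cons_of_mem k hx)) (by omega)
    refine ⟨k :: (List.replicate (k-1) 0 ++ L), ?_, ?_, ?_⟩
    · simp [h1]; omega
    · simp [List.sum_append, h2]; omega
    · simp only [List.map_cons, List.map_append, List.map_replicate, List.sum_cons,
        List.sum_append, List.sum_replicate, smul_eq_mul, mul_zero, h3]
      obtain ⟨m, rfl⟩ : ∃ m, k = m + 1 := ⟨k - 1, by omega⟩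
      simp only [Nat.add_sub_cancel]
      have htri : 2 * ((m+1)*m/2) = (m+1)*m := by simpa using two_tri (m+1)
      have hsq : (m+1)^2 = (m+1)*m + (m+1) := by ring
      rw [hsq]
      simp only [zero_pow, ne_eq, OfNat.ofNat_ne_zero, not_false_iff, mul_zero, zero_mul]
      omega
    
theorem map_get_sum (L : List ℕ) (g : ℕ → ℕ) :
    ∑ i : Fin L.length, g (L.get (Fin.cast rfl i)) = (L.map g).sum := by
  conv_rhs => rw [← List.ofFn_get L]
  rw [List.map_ofFn, List.sum_ofFn]
  rfl

/-- For every integer `s ≥ 5` and every nonnegative integer `c` with `c ≤ (s² − 5s)/4`,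
there exist nonnegative integers `a₁, …, a_s` summing to `s` whose squares sum to `s + 2c`. -/
theorem stmt0 (s c : ℕ) (hs : 5 ≤ s) (hc : (4 * c : ℤ) ≤ (s : ℤ) ^ 2 - 5 * s) :
    ∃ a : Fin s → ℕ, ∑ i, a i = s ∧ ∑ i, (a i) ^ 2 = s + 2 * c := by
  have hc' : 4*c ≤ s*(s-5) := by
    have : (4 * c : ℤ) ≤ ((s*(s-5) : ℕ) : ℤ) := by
      push_cast [Nat.cast_sub hs]
      nlinarith [hc]
    exact_mod_cast this
  obtain ⟨l, h1, h2, h3⟩ := decomp s c hc'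
  obtain ⟨L, hlen, hsum, hsq⟩ := buildL l s h1 h3
  have key : ∀ g : ℕ → ℕ, ∑ i : Fin s, g (L.get (Fin.cast hlen.symm i)) = (L.map g).sum := by
    intro g
    subst hlen
    rw [map_get_sum L g]
  refine ⟨fun i => L.get (Fin.cast hlen.symm i), ?_, ?_⟩
  · have h := key (fun x => x)
    simp only [List.map_id'] at h
    rw [h, hsum]
  · rw [key (fun x => x^2), hsq, h2]
end

section
/- Let k ≥ 3 be an integer and let f_k(x) = C(x, k) = x(x−1)⋯(x−k+1)/k! be the real polynomial extending the binomial coefficient, which is strictly increasing for x ≥ k. Then for every real x ≥ 2k+1, f_k^{-1}(f_{k−1}(x)) < (k^{1/k} + 1)·x^{(k−1)/k}, where f_k^{-1} is the inverse of f_k on [k, ∞). -/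
/-- The real polynomial extension `f_j(x) = x(x−1)⋯(x−j+1)/j!` of the binomial
coefficient `C(x, j)`. -/
noncomputable def fpoly (j : ℕ) (x : ℝ) : ℝ :=
  (∏ i ∈ Finset.range j, (x - i)) / (Nat.factorial j)

lemma fpoly_strictMonoOn (k : ℕ) (hk : 1 ≤ k) :
    StrictMonoOn (fpoly k) (Set.Ici (k : ℝ)) := by
  intro a ha b hb hab
  simp only [Set.mem_Ici] at ha hb
  unfold fpoly
  have hfac : (0:ℝ) < (Nat.factorial k : ℝ) := by positivity
  have hprod : (∏ i ∈ Finset.range k, (a - i)) < ∏ i ∈ Finset.range k, (b - i) := by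
    apply Finset.prod_lt_prod
    · intro i hi
      rw [Finset.mem_range] at hi
      have h1 : (i:ℝ) < k := by exact_mod_cast hi
      have h2 : (i:ℝ) + 1 ≤ k := by
        have : (i + 1 : ℕ) ≤ k := hi
        exact_mod_cast this
      linarith
    · intro i _; linarith
    · refine ⟨0, ?_, by simpa⟩
      simp [Finset.mem_range]; omega
  exact div_lt_div_of_pos_right hprod hfac

/-- Let `k ≥ 3`. The function `f_k` is strictly increasing on `[k, ∞)`, and for every real
`x ≥ 2k+1`, `f_k⁻¹(f_{k−1}(x)) < (k^{1/k} + 1)·x^{(k−1)/k}`: i.e. any `y ≥ k` with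
`f_k(y) = f_{k−1}(x)` satisfies `y < (k^{1/k} + 1)·x^{(k−1)/k}`. -/
theorem stmt10 (k : ℕ) (hk : 3 ≤ k) :
    StrictMonoOn (fpoly k) (Set.Ici (k : ℝ)) ∧
      ∀ x : ℝ, 2 * k + 1 ≤ x → ∀ y : ℝ, (k : ℝ) ≤ y → fpoly k y = fpoly (k - 1) x →
        y < ((k : ℝ) ^ ((1 : ℝ) / k) + 1) * x ^ (((k : ℝ) - 1) / k) := by
  obtain ⟨m, rfl⟩ : ∃ m, k = m + 1 := ⟨k - 1, by omega⟩
  have hm : 2 ≤ m := by omega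
  have hmono := fpoly_strictMonoOn (m + 1) (by omega)
  refine ⟨hmono, ?_⟩
  intro x hx y hy hxy
  simp only [Nat.add_sub_cancel] at hxy
  have hKcast : ((m + 1 : ℕ) : ℝ) = (m : ℝ) + 1 := by push_cast; ring
  have hm1 : ((m:ℝ) + 1) ≠ 0 := by positivity
  have hx' : (2 * m + 3 : ℝ) ≤ x := by rw [hKcast] at hx; linarith
  have hx0 : (0:ℝ) < x := by linarith [show (0:ℝ) ≤ 2 * m by positivity]
  set e : ℝ := (((m + 1 : ℕ) : ℝ) - 1) / ((m + 1 : ℕ) : ℝ) with hedef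
  set c : ℝ := x ^ e with hcdef
  set d : ℝ := ((m + 1 : ℕ) : ℝ) ^ ((1:ℝ) / ((m + 1 : ℕ) : ℝ)) with hddef
  have hc0 : 0 < c := Real.rpow_pos_of_pos hx0 _
  have hd0 : 0 < d := Real.rpow_pos_of_pos (by positivity) _
  -- c ^ (m+1) = x ^ m
  have hcpow : c ^ (m + 1) = x ^ m := by
    rw [hcdef, ← Real.rpow_natCast (x ^ e) (m + 1), ← Real.rpow_mul hx0.le]
    rw [show e * ((m + 1 : ℕ) : ℝ) = (m : ℕ) by
      rw [hedef, hKcast]; push_cast; field_simp; ring]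
    exact Real.rpow_natCast x m
  -- d ^ (m+1) = m + 1
  have hdpow : d ^ (m + 1) = (m : ℝ) + 1 := by
    rw [hddef, ← Real.rpow_natCast (_ ^ _) (m + 1), ← Real.rpow_mul (by positivity)]
    rw [show (1:ℝ) / ((m + 1 : ℕ) : ℝ) * ((m + 1 : ℕ) : ℝ) = 1 by
      rw [hKcast]; field_simp]
    rw [Real.rpow_one, hKcast]
  have hd1 : 1 ≤ d := by
    by_contra h
    push_neg at h
    have : d ^ (m + 1) < 1 ^ (m + 1) := pow_lt_pow_left₀ h hd0.le (by omega)
    rw [hdpow, one_pow] at this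
    have : (0:ℝ) ≤ (m:ℝ) := by positivity
    linarith
  -- c > m
  have hcm : (m : ℝ) < c := by
    have key : ((m:ℝ)) ^ (m + 1) < c ^ (m + 1) := by
      rw [hcpow]
      have h1 : ((m:ℝ)) ^ (m + 1) < (2 * m : ℝ) ^ m := by
        have hlt : (m : ℝ) < 2 ^ m := by
          exact_mod_cast (Nat.lt_two_pow_self (n := m))
        calc ((m:ℝ)) ^ (m + 1) = (m:ℝ) ^ m * (m:ℝ) := by ring
          _ < (m:ℝ) ^ m * 2 ^ m := by
              apply mul_lt_mul_of_pos_left hlt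
              positivity
          _ = (2 * m : ℝ) ^ m := by rw [mul_pow]; ring
      have h2 : ((2 * m : ℝ)) ^ m ≤ x ^ m := by
        apply pow_le_pow_left₀ (by positivity)
        linarith
      linarith
    exact lt_of_pow_lt_pow_left₀ (m + 1) hc0.le key
  set B : ℝ := (d + 1) * c with hBdef
  have hBm : d * c < B - m := by rw [hBdef]; nlinarith
  have hdc0 : 0 < d * c := mul_pos hd0 hc0
  -- B ≥ m + 1
  have hm2 : (2:ℝ) ≤ (m:ℝ) := by exact_mod_cast hm
  have hBK : ((m + 1 : ℕ) : ℝ) ≤ B := by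
    rw [hKcast, hBdef]
    nlinarith [mul_nonneg (by linarith : (0:ℝ) ≤ d - 1) hc0.le]
  -- key inequality : fpoly m x < fpoly (m+1) B
  have hfacpos : (0:ℝ) < (Nat.factorial m : ℝ) := by positivity
  have hfac1 : ((Nat.factorial (m+1) : ℕ) : ℝ) = ((m:ℝ) + 1) * (Nat.factorial m : ℝ) := by
    rw [Nat.factorial_succ]; push_cast; ring
  have hupper : fpoly m x ≤ x ^ m / (Nat.factorial m : ℝ) := by
    unfold fpoly
    apply div_le_div_of_nonneg_right (c := (Nat.factorial m : ℝ)) ?_ hfacpos.le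
    calc (∏ i ∈ Finset.range m, (x - i)) ≤ ∏ i ∈ Finset.range m, x := by
          apply Finset.prod_le_prod
          · intro i hi
            rw [Finset.mem_range] at hi
            have : (i:ℝ) < m := by exact_mod_cast hi
            linarith
          · intro i hi
            have : (0:ℝ) ≤ i := by positivity
            linarith
      _ = x ^ m := by rw [Finset.prod_const, Finset.card_range]
  have hlower : (B - m) ^ (m + 1) / (Nat.factorial (m+1) : ℝ) ≤ fpoly (m+1) B := by
    unfold fpoly
    apply div_le_div_of_nonneg_right ?_ (show (0:ℝ) ≤ (Nat.factorial (m+1) : ℝ) by positivity)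
    calc (B - m) ^ (m + 1) = ∏ _i ∈ Finset.range (m+1), (B - m) := by
          rw [Finset.prod_const, Finset.card_range]
      _ ≤ ∏ i ∈ Finset.range (m+1), (B - i) := by
          apply Finset.prod_le_prod
          · intro i _; linarith
          · intro i hi
            rw [Finset.mem_range] at hi
            have : (i:ℝ) ≤ m := by exact_mod_cast Nat.lt_succ_iff.mp hi
            linarith
  have hmid : x ^ m / (Nat.factorial m : ℝ) < (B - m) ^ (m + 1) / (Nat.factorial (m+1) : ℝ) := by
    have hpow : ((m:ℝ) + 1) * x ^ m < (B - m) ^ (m + 1) := by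
      have : (d * c) ^ (m + 1) < (B - m) ^ (m + 1) :=
        pow_lt_pow_left₀ hBm hdc0.le (by omega)
      rw [mul_pow, hdpow, hcpow] at this
      exact this
    rw [hfac1, div_lt_div_iff₀ hfacpos (by positivity)]
    calc x ^ m * (((m:ℝ) + 1) * (Nat.factorial m : ℝ))
        = (((m:ℝ) + 1) * x ^ m) * (Nat.factorial m : ℝ) := by ring
      _ < (B - m) ^ (m + 1) * (Nat.factorial m : ℝ) := by
          exact mul_lt_mul_of_pos_right hpow hfacpos
  have hkey : fpoly (m+1) y < fpoly (m+1) B := by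
    rw [hxy]
    calc fpoly m x ≤ x ^ m / (Nat.factorial m : ℝ) := hupper
      _ < (B - m) ^ (m + 1) / (Nat.factorial (m+1) : ℝ) := hmid
      _ ≤ fpoly (m+1) B := hlower
  exact (hmono.lt_iff_lt (Set.mem_Ici.mpr hy) (Set.mem_Ici.mpr hBK)).mp hkey
end

section
/- For every integer r ≥ 49 and every integer b̄ with 0 ≤ b̄ ≤ C(r+2, 2), there exist nonnegative integers a₃, a₄, …, a_r such that ∑_{s=3}^{r} a_s · C(s, 3) = b̄ and ∑_{s=3}^{r} a_s · s ≤ r. -/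
/-! Auxiliary development: a greedy representation of natural numbers as sums of
binomial coefficients `C(s,3)`, with weight control. -/

/-- `c3 s = C(s,3)` computed by fast arithmetic. -/
def c3 (s : ℕ) : ℕ := s * (s - 1) * (s - 2) / 6

/-- Upward search for the largest `s` with `C(s,3) ≤ b`. -/
def nxtA (b : ℕ) : ℕ → ℕ → ℕ
  | 0, s => s
  | f + 1, s => if c3 (s + 1) ≤ b then nxtA b f (s + 1) else s

/-- The largest `s` with `C(s,3) ≤ b`. -/
def nxt (b : ℕ) : ℕ := nxtA b b 2

/-- Greedy weight, with fuel. -/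
def gwAux : ℕ → ℕ → ℕ
  | 0, _ => 0
  | f + 1, b => if b = 0 then 0 else nxt b + gwAux f (b - c3 (nxt b))

/-- Greedy weight. -/
def gw (b : ℕ) : ℕ := gwAux b b

lemma le_sq (n : ℕ) : n ≤ n * n := by
  cases n with
  | zero => simp
  | succ k =>
    calc k + 1 = (k + 1) * 1 := by ring
      _ ≤ (k + 1) * (k + 1) := Nat.mul_le_mul_left (k + 1) (by omega)

lemma two_c2 (n : ℕ) : 2 * (n + 2).choose 2 = (n + 2) * (n + 1) := by
  induction n with
  | zero => rfl
  | succ m ih =>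
    have : (m + 3).choose 2 = (m + 2).choose 1 + (m + 2).choose 2 :=
      Nat.choose_succ_succ' (m + 2) 1
    rw [this]
    simp only [Nat.choose_one_right]
    nlinarith [ih]

lemma six_choose3 (n : ℕ) : 6 * (n + 3).choose 3 = (n + 3) * (n + 2) * (n + 1) := by
  induction n with
  | zero => rfl
  | succ m ih =>
    have h1 : (m + 4).choose 3 = (m + 3).choose 2 + (m + 3).choose 3 :=
      Nat.choose_succ_succ' (m + 3) 2
    have h2 : 2 * (m + 3).choose 2 = (m + 3) * (m + 2) := two_c2 (m + 1)
    rw [h1]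
    nlinarith [ih, h2]

lemma six_c3 (s : ℕ) : 6 * c3 s = s * (s - 1) * (s - 2) := by
  match s with
  | 0 => rfl
  | 1 => rfl
  | 2 => rfl
  | (n + 3) =>
    have h := six_choose3 n
    have e1 : n + 3 - 1 = n + 2 := by omega
    have e2 : n + 3 - 2 = n + 1 := by omega
    unfold c3
    rw [e1, e2, ← h]
    omega

lemma c3_eq_choose (s : ℕ) : c3 s = s.choose 3 := by
  match s with
  | 0 => rfl
  | 1 => rfl
  | 2 => rfl
  | (n + 3) =>
    have h := six_choose3 n
    have h2 := six_c3 (n + 3)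
    have e1 : n + 3 - 1 = n + 2 := by omega
    have e2 : n + 3 - 2 = n + 1 := by omega
    rw [e1, e2] at h2
    omega

lemma c3_mono {s t : ℕ} (h : s ≤ t) : c3 s ≤ c3 t := by
  rw [c3_eq_choose, c3_eq_choose]
  exact Nat.choose_le_choose 3 h

/-- `(s-2)^2 ≤ C(s,3)` for all `s` (ℕ-truncated subtraction). -/
lemma sub_two_sq_le_c3 (s : ℕ) : (s - 2) * (s - 2) ≤ c3 s := by
  match s with
  | 0 => simp [c3]
  | 1 => simp [c3]
  | 2 => simp [c3]
  | (n + 3) =>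
    have h := six_c3 (n + 3)
    have e1 : n + 3 - 1 = n + 2 := by omega
    have e2 : n + 3 - 2 = n + 1 := by omega
    rw [e1, e2] at h
    have hnn : n ≤ n * n := le_sq n
    have hx : (n + 3) * (n + 2) = n * n + 5 * n + 6 := by ring
    have h1 : 6 * (n + 1) ≤ (n + 3) * (n + 2) := by omega
    have h2 : 6 * (n + 1) * (n + 1) ≤ (n + 3) * (n + 2) * (n + 1) :=
      Nat.mul_le_mul_right (n + 1) h1
    rw [e2]
    have e3 : 6 * (n + 1) * (n + 1) = 6 * ((n + 1) * (n + 1)) := by ring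
    rw [e3] at h2
    omega

lemma nxtA_inv (b : ℕ) : ∀ f s, c3 s ≤ b → c3 (nxtA b f s) ≤ b := by
  intro f
  induction f with
  | zero => intro s h; exact h
  | succ g ih =>
    intro s h
    show c3 (if c3 (s + 1) ≤ b then nxtA b g (s + 1) else s) ≤ b
    by_cases hc : c3 (s + 1) ≤ b
    · rw [if_pos hc]; exact ih (s + 1) hc
    · rw [if_neg hc]; exact h

lemma nxtA_ge (b : ℕ) : ∀ f s, s ≤ nxtA b f s := by
  intro f
  induction f with
  | zero => intro s; exact le_rfl
  | succ g ih =>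
    intro s
    show s ≤ if c3 (s + 1) ≤ b then nxtA b g (s + 1) else s
    by_cases hc : c3 (s + 1) ≤ b
    · rw [if_pos hc]; exact le_trans (by omega) (ih (s + 1))
    · rw [if_neg hc]

lemma nxtA_greatest (b : ℕ) : ∀ f s, c3 s ≤ b → b + 2 ≤ s + f → b < c3 (nxtA b f s + 1) := by
  intro f
  induction f with
  | zero =>
    intro s h hf
    show b < c3 (s + 1)
    by_cases hb2 : 2 ≤ b
    · exfalso
      have h1 : (s - 2) * (s - 2) ≤ c3 s := sub_two_sq_le_c3 s
      have hs2 : b ≤ s - 2 := by omega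
      have h2 : b * b ≤ (s - 2) * (s - 2) := Nat.mul_le_mul hs2 hs2
      have h3 : 2 * b ≤ b * b := Nat.mul_le_mul_right b hb2
      omega
    · have hs3 : 3 ≤ s + 1 := by omega
      have h1 : c3 3 ≤ c3 (s + 1) := c3_mono hs3
      by_cases hb1 : b = 0
      · subst hb1
        have : c3 3 = 1 := by norm_num [c3]
        omega
      · have hb1' : b = 1 := by omega
        subst hb1'
        have hs4 : 4 ≤ s + 1 := by omega
        have h4 : c3 4 ≤ c3 (s + 1) := c3_mono hs4
        have : c3 4 = 4 := by norm_num [c3]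
        omega
  | succ g ih =>
    intro s h hf
    show b < c3 ((if c3 (s + 1) ≤ b then nxtA b g (s + 1) else s) + 1)
    by_cases hc : c3 (s + 1) ≤ b
    · rw [if_pos hc]; exact ih (s + 1) hc (by omega)
    · rw [if_neg hc]; omega

lemma nxt_c3_le' (b : ℕ) : c3 (nxt b) ≤ b := by
  apply nxtA_inv
  norm_num [c3]

lemma lt_c3_nxt_succ (b : ℕ) : b < c3 (nxt b + 1) := by
  apply nxtA_greatest
  · norm_num [c3]
  · omega

lemma le_nxt {b t : ℕ} (h : c3 t ≤ b) : t ≤ nxt b := by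
  by_contra hcon
  push_neg at hcon
  have h1 : c3 (nxt b + 1) ≤ c3 t := c3_mono (by omega)
  have h2 := lt_c3_nxt_succ b
  omega

lemma nxt_ge_three {b : ℕ} (hb : 1 ≤ b) : 3 ≤ nxt b := by
  apply le_nxt
  have : c3 3 = 1 := by norm_num [c3]
  omega

lemma nxt_c3_le {b : ℕ} (_ : 1 ≤ b) : c3 (nxt b) ≤ b := nxt_c3_le' b

lemma nxt_c3_pos {b : ℕ} (hb : 1 ≤ b) : 1 ≤ c3 (nxt b) := by
  have h := c3_mono (nxt_ge_three hb)
  simpa [c3] using h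

/-- The remainder is less than `C(s,2)`: `2(b - c3 (nxt b)) < s(s-1)`. -/
lemma rem_bound {b : ℕ} (hb : 1 ≤ b) :
    2 * (b - c3 (nxt b)) < nxt b * (nxt b - 1) := by
  set s := nxt b with hs
  have h3 : 3 ≤ s := nxt_ge_three hb
  have hle : c3 s ≤ b := nxt_c3_le hb
  have hlt : b < c3 (s + 1) := lt_c3_nxt_succ b
  have h6s : 6 * c3 s = s * (s - 1) * (s - 2) := six_c3 s
  have h6s1 : 6 * c3 (s + 1) = (s + 1) * s * (s - 1) := by
    have := six_c3 (s + 1)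
    have e1 : s + 1 - 1 = s := by omega
    have e2 : s + 1 - 2 = s - 1 := by omega
    rwa [e1, e2] at this
  -- 6*(b - c3 s) < 6*c3 (s+1) - 6*c3 s = 3*s*(s-1)
  have key : (s + 1) * s * (s - 1) = s * (s - 1) * (s - 2) + 3 * (s * (s - 1)) := by
    obtain ⟨m, hm⟩ : ∃ m, s = m + 3 := ⟨s - 3, by omega⟩
    rw [hm]
    have e1 : m + 3 - 1 = m + 2 := by omega
    have e2 : m + 3 - 2 = m + 1 := by omega
    rw [e1, e2]
    ring
  omega

lemma gwAux_zero (f : ℕ) : gwAux f 0 = 0 := by cases f <;> rfl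

lemma gwAux_eq (f : ℕ) : ∀ f' b, b ≤ f → b ≤ f' → gwAux f b = gwAux f' b := by
  induction f with
  | zero =>
    intro f' b hb _
    interval_cases b
    exact (gwAux_zero f').symm
  | succ g ih =>
    intro f' b hbf hbf'
    rcases Nat.eq_zero_or_pos b with rfl | hb
    · rw [gwAux_zero, gwAux_zero]
    · obtain ⟨g', rfl⟩ : ∃ g', f' = g' + 1 := ⟨f' - 1, by omega⟩
      show gwAux (g + 1) b = gwAux (g' + 1) b
      unfold gwAux
      rw [if_neg (by omega), if_neg (by omega)]
      congr 1
      have hc : 1 ≤ c3 (nxt b) := nxt_c3_pos hb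
      exact ih g' (b - c3 (nxt b)) (by omega) (by omega)

lemma gw_eq {b : ℕ} (hb : 1 ≤ b) : gw b = nxt b + gw (b - c3 (nxt b)) := by
  obtain ⟨g, rfl⟩ : ∃ g, b = g + 1 := ⟨b - 1, by omega⟩
  have hc : 1 ≤ c3 (nxt (g + 1)) := nxt_c3_pos hb
  show gwAux (g + 1) (g + 1) = nxt (g + 1) + gw (g + 1 - c3 (nxt (g + 1)))
  have hstep : gwAux (g + 1) (g + 1)
      = if g + 1 = 0 then 0 else nxt (g + 1) + gwAux g (g + 1 - c3 (nxt (g + 1))) := rfl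
  rw [hstep, if_neg (by omega)]
  have hfuel := gwAux_eq g (g + 1 - c3 (nxt (g + 1))) (g + 1 - c3 (nxt (g + 1)))
    (by omega) le_rfl
  rw [hfuel]
  rfl

set_option maxRecDepth 4000 in
lemma chunk_A1 : ∀ i < 500, gw i ≤ 49 := by decide

set_option maxRecDepth 4000 in
lemma chunk_A2 : ∀ i < 500, gw (500 + i) ≤ 49 := by decide

set_option maxRecDepth 4000 in
lemma chunk_A3 : ∀ i < 276, gw (1000 + i) ≤ 49 := by decide

set_option maxRecDepth 4000 in
lemma chunk_A4 : ∀ i < 18, gw (1276 + i) ≤ 50 := by decide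

set_option maxRecDepth 4000 in
lemma chunk_B1 : ∀ i < 500, (gw (1294 + i) + 1) * (gw (1294 + i) + 1) ≤ 2 * (1294 + i) := by
  decide

set_option maxRecDepth 4000 in
lemma chunk_B2 : ∀ i < 506, (gw (1794 + i) + 1) * (gw (1794 + i) + 1) ≤ 2 * (1794 + i) := by
  decide

set_option maxRecDepth 4000 in
lemma chunk_C1 : ∀ b < 455, gw b ≤ 16 ∨ (gw b - 16) * (gw b - 16) ≤ 2 * b := by decide

lemma base_P3 (b : ℕ) (hb : b < 455) : gw b ≤ Nat.sqrt (2 * b) + 16 := by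
  rcases chunk_C1 b hb with h | h
  · omega
  · have := Nat.le_sqrt.mpr h
    omega

lemma base_P1 (b : ℕ) (hb : b < 1294) : gw b ≤ if b ≤ 1275 then 49 else 50 := by
  by_cases h1 : b < 500
  · rw [if_pos (by omega)]; exact chunk_A1 b h1
  by_cases h2 : b < 1000
  · rw [if_pos (by omega)]
    have h := chunk_A2 (b - 500) (by omega)
    have e : 500 + (b - 500) = b := by omega
    rwa [e] at h
  by_cases h3 : b < 1276
  · rw [if_pos (by omega)]
    have h := chunk_A3 (b - 1000) (by omega)
    have e : 1000 + (b - 1000) = b := by omega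
    rwa [e] at h
  · rw [if_neg (by omega)]
    have h := chunk_A4 (b - 1276) (by omega)
    have e : 1276 + (b - 1276) = b := by omega
    rwa [e] at h

lemma base_P2 (b : ℕ) (hb : b < 2300) (hb' : 1294 ≤ b) : gw b ≤ Nat.sqrt (2 * b) - 1 := by
  have key : (gw b + 1) * (gw b + 1) ≤ 2 * b := by
    by_cases h1 : b < 1794
    · have h := chunk_B1 (b - 1294) (by omega)
      have e : 1294 + (b - 1294) = b := by omega
      rwa [e] at h
    · have h := chunk_B2 (b - 1794) (by omega)
      have e : 1794 + (b - 1794) = b := by omega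
      rwa [e] at h
  have := Nat.le_sqrt.mpr key
  omega

lemma E1 {s : ℕ} (hs : 15 ≤ s) : (2 * s - 1) * (2 * s - 1) ≤ 2 * c3 s := by
  obtain ⟨m, rfl⟩ : ∃ m, s = m + 15 := ⟨s - 15, by omega⟩
  have h6 : 6 * c3 (m + 15) = (m + 15) * (m + 14) * (m + 13) := by
    have := six_c3 (m + 15)
    have e1 : m + 15 - 1 = m + 14 := by omega
    have e2 : m + 15 - 2 = m + 13 := by omega
    rwa [e1, e2] at this
  have key : 3 * ((2 * (m + 15) - 1) * (2 * (m + 15) - 1)) ≤ (m + 15) * (m + 14) * (m + 13) := by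
    have e : 2 * (m + 15) - 1 = 2 * m + 29 := by omega
    rw [e]
    have hL : 3 * ((2 * m + 29) * (2 * m + 29)) = 12 * (m * m) + 348 * m + 2523 := by ring
    have hR : (m + 15) * (m + 14) * (m + 13)
        = m * m * m + 42 * (m * m) + 587 * m + 2730 := by ring
    rw [hL, hR]
    linarith [Nat.zero_le (m * m * m), Nat.zero_le (m * m)]
  omega

lemma E2 {s : ℕ} (hs : 25 ≤ s) : (2 * s + 16) * (2 * s + 16) ≤ 2 * c3 s := by
  obtain ⟨m, rfl⟩ : ∃ m, s = m + 25 := ⟨s - 25, by omega⟩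
  have h6 : 6 * c3 (m + 25) = (m + 25) * (m + 24) * (m + 23) := by
    have := six_c3 (m + 25)
    have e1 : m + 25 - 1 = m + 24 := by omega
    have e2 : m + 25 - 2 = m + 23 := by omega
    rwa [e1, e2] at this
  have key : 3 * ((2 * (m + 25) + 16) * (2 * (m + 25) + 16)) ≤ (m + 25) * (m + 24) * (m + 23) := by
    have hL : 3 * ((2 * (m + 25) + 16) * (2 * (m + 25) + 16))
        = 12 * (m * m) + 792 * m + 13068 := by ring
    have hR : (m + 25) * (m + 24) * (m + 23)
        = m * m * m + 72 * (m * m) + 1727 * m + 13800 := by ring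
    rw [hL, hR]
    linarith [Nat.zero_le (m * m * m), Nat.zero_le (m * m)]
  linarith

/-- Global bound: `gw b ≤ √(2b) + 16`. -/
lemma gw_le_sqrt_add (b : ℕ) : gw b ≤ Nat.sqrt (2 * b) + 16 := by
  induction b using Nat.strong_induction_on with
  | _ b ih =>
    by_cases hbase : b < 455
    · exact base_P3 b hbase
    push_neg at hbase
    have hb1 : 1 ≤ b := by omega
    have hs15 : 15 ≤ nxt b := by
      apply le_nxt
      have : c3 15 = 455 := by norm_num [c3]
      omega
    have hcle : c3 (nxt b) ≤ b := nxt_c3_le hb1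
    have hcpos : 1 ≤ c3 (nxt b) := nxt_c3_pos hb1
    have hrem := rem_bound hb1
    have ih' : gw (b - c3 (nxt b)) ≤ Nat.sqrt (2 * (b - c3 (nxt b))) + 16 :=
      ih (b - c3 (nxt b)) (by omega)
    have hmul : nxt b * (nxt b - 1) ≤ nxt b * nxt b :=
      Nat.mul_le_mul_left (nxt b) (by omega)
    have hsq' : Nat.sqrt (2 * (b - c3 (nxt b))) < nxt b := Nat.sqrt_lt.mpr (by omega)
    have hE := E1 hs15
    have hsq : 2 * nxt b - 1 ≤ Nat.sqrt (2 * b) := Nat.le_sqrt.mpr (by omega)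
    have heq := gw_eq hb1
    omega

/-- Sharp bound for large `b`: `gw b ≤ √(2b) - 1` for `b ≥ 1294`. -/
lemma gw_le_sqrt_sub (b : ℕ) (hb : 1294 ≤ b) : gw b ≤ Nat.sqrt (2 * b) - 1 := by
  by_cases hbase : b < 2300
  · exact base_P2 b hbase hb
  push_neg at hbase
  have hb1 : 1 ≤ b := by omega
  have hs25 : 25 ≤ nxt b := by
    apply le_nxt
    have : c3 25 = 2300 := by norm_num [c3]
    omega
  have hcle : c3 (nxt b) ≤ b := nxt_c3_le hb1
  have hcpos : 1 ≤ c3 (nxt b) := nxt_c3_pos hb1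
  have hrem := rem_bound hb1
  have ih' : gw (b - c3 (nxt b)) ≤ Nat.sqrt (2 * (b - c3 (nxt b))) + 16 :=
    gw_le_sqrt_add (b - c3 (nxt b))
  have hmul : nxt b * (nxt b - 1) ≤ nxt b * nxt b :=
    Nat.mul_le_mul_left (nxt b) (by omega)
  have hsq' : Nat.sqrt (2 * (b - c3 (nxt b))) < nxt b := Nat.sqrt_lt.mpr (by omega)
  have hE := E2 hs25
  have hsq : 2 * nxt b + 16 ≤ Nat.sqrt (2 * b) := Nat.le_sqrt.mpr (by omega)
  have heq := gw_eq hb1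
  omega

/-- Main weight bound. -/
lemma gw_le (r b : ℕ) (hr : 49 ≤ r) (hb : b ≤ (r + 2).choose 2) : gw b ≤ r := by
  by_cases h1 : b ≤ 1275
  · have := base_P1 b (by omega)
    rw [if_pos h1] at this
    omega
  by_cases h2 : b ≤ 1293
  · have hgw := base_P1 b (by omega)
    rw [if_neg h1] at hgw
    -- show 50 ≤ r
    rcases Nat.lt_or_ge r 50 with hr50 | hr50
    · have hr49 : r = 49 := by omega
      subst hr49
      have : (49 + 2).choose 2 = 1275 := by decide
      omega
    · omega
  -- b ≥ 1294
  have hb1294 : 1294 ≤ b := by omega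
  have hmain := gw_le_sqrt_sub b hb1294
  have h2c : 2 * (r + 2).choose 2 = (r + 2) * (r + 1) := two_c2 r
  have hsqb : Nat.sqrt (2 * b) < r + 2 := by
    rw [Nat.sqrt_lt]
    calc 2 * b ≤ (r + 2) * (r + 1) := by omega
      _ < (r + 2) * (r + 2) := by nlinarith
  omega

/-- Representation lemma: the greedy algorithm yields a representation of weight `gw b`. -/
lemma gw_rep : ∀ b r : ℕ, gw b ≤ r →
    ∃ a : ℕ → ℕ,
      (∑ s ∈ Finset.Icc 3 r, a s * s.choose 3 = b) ∧
      (∑ s ∈ Finset.Icc 3 r, a s * s ≤ gw b) := by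
  intro b
  induction b using Nat.strong_induction_on with
  | _ b ih =>
    intro r hgwr
    rcases Nat.eq_zero_or_pos b with rfl | hb1
    · exact ⟨fun _ => 0, by simp, by simp⟩
    set s₀ := nxt b with hs₀
    have h3 : 3 ≤ s₀ := nxt_ge_three hb1
    have hcle : c3 s₀ ≤ b := nxt_c3_le hb1
    have hcpos : 1 ≤ c3 s₀ := nxt_c3_pos hb1
    have heq : gw b = s₀ + gw (b - c3 s₀) := gw_eq hb1
    set b' := b - c3 s₀ with hb'
    have hb'lt : b' < b := by omega
    obtain ⟨a', ha'1, ha'2⟩ := ih b' hb'lt r (by omega)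
    have hs₀mem : s₀ ∈ Finset.Icc 3 r := Finset.mem_Icc.mpr ⟨h3, by omega⟩
    refine ⟨fun t => a' t + if t = s₀ then 1 else 0, ?_, ?_⟩
    · have hsplit :
        ∑ s ∈ Finset.Icc 3 r, (a' s + if s = s₀ then 1 else 0) * s.choose 3
          = (∑ s ∈ Finset.Icc 3 r, a' s * s.choose 3)
            + ∑ s ∈ Finset.Icc 3 r, (if s = s₀ then s.choose 3 else 0) := by
        rw [← Finset.sum_add_distrib]
        congr 1
        ext s
        by_cases h : s = s₀ <;> simp [h, add_mul]
      rw [hsplit, ha'1, Finset.sum_ite_eq' (Finset.Icc 3 r) s₀ (fun s => s.choose 3),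
        if_pos hs₀mem]
      rw [← c3_eq_choose]
      omega
    · have hsplit :
        ∑ s ∈ Finset.Icc 3 r, (a' s + if s = s₀ then 1 else 0) * s
          = (∑ s ∈ Finset.Icc 3 r, a' s * s)
            + ∑ s ∈ Finset.Icc 3 r, (if s = s₀ then s else 0) := by
        rw [← Finset.sum_add_distrib]
        congr 1
        ext s
        by_cases h : s = s₀ <;> simp [h, add_mul]
      rw [hsplit, Finset.sum_ite_eq' (Finset.Icc 3 r) s₀ (fun s => s), if_pos hs₀mem]
      omega

/-- For every integer `r ≥ 49` and every `0 ≤ b̄ ≤ C(r+2, 2)`, there exist nonnegative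
integers `a₃, …, a_r` with `∑ a_s·C(s,3) = b̄` and `∑ a_s·s ≤ r`. -/
theorem stmt13 (r : ℕ) (hr : 49 ≤ r) (bbar : ℕ) (hb : bbar ≤ (r + 2).choose 2) :
    ∃ a : ℕ → ℕ,
      (∑ s ∈ Finset.Icc 3 r, a s * s.choose 3 = bbar) ∧
      (∑ s ∈ Finset.Icc 3 r, a s * s ≤ r) := by
  have hgw : gw bbar ≤ r := gw_le r bbar hr hb
  obtain ⟨a, h1, h2⟩ := gw_rep bbar r hgw
  exact ⟨a, h1, le_trans h2 hgw⟩
end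

section
/- Let A = (I_r | M) be an r × n rational matrix with M an r × k matrix and n = r + k. Then the number of invertible r × r submatrices of A (choices of r columns forming an invertible matrix) equals the number of invertible square submatrices of M, where the empty 0 × 0 matrix counts as invertible. -/
/-- The square submatrix of `M` determined by row set `s` and column set `t` of equal
cardinality is invertible (the empty submatrix counts as invertible). -/
def IsInvSquareSubmatrix {r k : ℕ} (M : Matrix (Fin r) (Fin k) ℚ)
    (s : Finset (Fin r)) (t : Finset (Fin k)) : Prop :=
  ∃ (n : ℕ) (hs : s.card = n) (ht : t.card = n),
    IsUnit (Matrix.det (Matrix.of fun i j : Fin n =>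
      M (s.orderEmbOfFin hs i) (t.orderEmbOfFin ht j)))

/-- The number of invertible square submatrices of `M`. -/
noncomputable def numInvSquareSubmatrices {r k : ℕ} (M : Matrix (Fin r) (Fin k) ℚ) : ℕ :=
  {p : Finset (Fin r) × Finset (Fin k) | IsInvSquareSubmatrix M p.1 p.2}.ncard

open Finset Matrix

section
variable {ι κ R : Type*}

lemma isUnit_det_submatrix_equiv [Fintype ι] [DecidableEq ι]
    [Fintype κ] [DecidableEq κ] [CommRing R] (B : Matrix ι ι R) (e f : κ ≃ ι) :
    IsUnit (B.submatrix e f).det ↔ IsUnit B.det := by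
  have h : B.submatrix e f = (B.submatrix e e).submatrix id (f.trans e.symm) := by
    ext i j; simp [Matrix.submatrix_apply]
  have hsu : IsUnit ((Equiv.Perm.sign (f.trans e.symm) : ℤ) : R) := by
    rcases Int.units_eq_one_or (Equiv.Perm.sign (f.trans e.symm)) with h1 | h1 <;>
      simp [h1]
  rw [h, Matrix.det_permute' (f.trans e.symm) (B.submatrix e e),
    Matrix.det_submatrix_equiv_self, IsUnit.mul_iff]
  simp [hsu]

end

def S0 (r k : ℕ) (c : Finset (Fin (r + k))) : Finset (Fin r) :=
  Finset.univ.filter fun i => Fin.castAdd k i ∈ c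

def T0 (r k : ℕ) (c : Finset (Fin (r + k))) : Finset (Fin k) :=
  Finset.univ.filter fun j => Fin.natAdd r j ∈ c

lemma keyCore (r k : ℕ) (M : Matrix (Fin r) (Fin k) ℚ)
    (A : Matrix (Fin r) (Fin (r + k)) ℚ)
    (hA : A = Matrix.of fun i j => (Matrix.fromCols 1 M) i (finSumFinEquiv.symm j))
    (c : Finset (Fin (r + k))) (hc : c.card = r) {n : ℕ}
    (hs : ((S0 r k c)ᶜ).card = n) (ht : (T0 r k c).card = n) :
    IsUnit (Matrix.det (Matrix.of fun i j : Fin r => A i (c.orderEmbOfFin hc j))) ↔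
      IsUnit (Matrix.det (Matrix.of fun i j : Fin n =>
        M (((S0 r k c)ᶜ).orderEmbOfFin hs i) ((T0 r k c).orderEmbOfFin ht j))) := by
  classical
  set s₀ := S0 r k c with hs₀
  set t := T0 r k c with ht0
  set m := s₀.card with hm
  have hmn : m + n = r := by
    have h1 := Finset.card_add_card_compl s₀
    rw [Fintype.card_fin] at h1
    omega
  set Y : Matrix (Fin n) (Fin n) ℚ :=
    Matrix.of fun i j => M ((s₀ᶜ).orderEmbOfFin hs i) (t.orderEmbOfFin ht j) with hY
  set X : Matrix (Fin m) (Fin n) ℚ :=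
    Matrix.of fun i j => M (s₀.orderEmbOfFin rfl i) (t.orderEmbOfFin ht j) with hX
  set Q : Matrix (Fin m ⊕ Fin n) (Fin m ⊕ Fin n) ℚ := Matrix.fromBlocks 1 X 0 Y with hQ
  have hdetQ : Q.det = Y.det := by
    rw [hQ, Matrix.det_fromBlocks_zero₂₁, Matrix.det_one, one_mul]
  -- row bijection
  have hφ : Function.Bijective (Sum.elim (s₀.orderEmbOfFin rfl) ((s₀ᶜ).orderEmbOfFin hs) :
      Fin m ⊕ Fin n → Fin r) := by
    rw [Fintype.bijective_iff_injective_and_card]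
    refine ⟨?_, by simp [hmn]⟩
    rintro (a | a) (b | b) h <;> simp only [Sum.elim_inl, Sum.elim_inr] at h
    · exact congrArg Sum.inl ((s₀.orderEmbOfFin rfl).injective h)
    · exfalso
      have h1 := Finset.orderEmbOfFin_mem s₀ rfl a
      have h2 := Finset.orderEmbOfFin_mem s₀ᶜ hs b
      rw [h] at h1
      exact (Finset.mem_compl.mp h2) h1
    · exfalso
      have h1 := Finset.orderEmbOfFin_mem s₀ᶜ hs a
      have h2 := Finset.orderEmbOfFin_mem s₀ rfl b
      rw [h] at h1
      exact (Finset.mem_compl.mp h1) h2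
    · exact congrArg Sum.inr (((s₀ᶜ).orderEmbOfFin hs).injective h)
  have hmemL : ∀ i : Fin m, Fin.castAdd k (s₀.orderEmbOfFin rfl i) ∈ c := by
    intro i
    have h1 := Finset.orderEmbOfFin_mem s₀ rfl i
    simp only [hs₀, S0, Finset.mem_filter] at h1
    exact h1.2
  have hmemR : ∀ j : Fin n, Fin.natAdd r (t.orderEmbOfFin ht j) ∈ c := by
    intro j
    have h1 := Finset.orderEmbOfFin_mem t ht j
    simp only [ht0, T0, Finset.mem_filter] at h1
    exact h1.2
  have hψ : Function.Bijective (fun x : Fin m ⊕ Fin n =>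
      (⟨Sum.elim (fun i => Fin.castAdd k (s₀.orderEmbOfFin rfl i))
        (fun j => Fin.natAdd r (t.orderEmbOfFin ht j)) x, by
          cases x with
          | inl i => exact hmemL i
          | inr j => exact hmemR j⟩ : ↥c)) := by
    rw [Fintype.bijective_iff_injective_and_card]
    refine ⟨?_, by simp [Fintype.card_coe, hc, hmn]⟩
    rintro (a | a) (b | b) h <;>
      simp only [Subtype.mk.injEq, Sum.elim_inl, Sum.elim_inr] at h
    · have h' : s₀.orderEmbOfFin rfl a = s₀.orderEmbOfFin rfl b :=
        Fin.val_injective (by simpa using congrArg Fin.val h)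
      exact congrArg Sum.inl ((s₀.orderEmbOfFin rfl).injective h')
    · exfalso
      have hv := congrArg Fin.val h
      have hlt := (s₀.orderEmbOfFin rfl a).isLt
      simp only [Fin.coe_castAdd, Fin.coe_natAdd] at hv
      omega
    · exfalso
      have hv := congrArg Fin.val h
      have hlt := (s₀.orderEmbOfFin rfl b).isLt
      simp only [Fin.coe_castAdd, Fin.coe_natAdd] at hv
      omega
    · have h' : t.orderEmbOfFin ht a = t.orderEmbOfFin ht b :=
        Fin.val_injective (by simpa using congrArg Fin.val h)
      exact congrArg Sum.inr ((t.orderEmbOfFin ht).injective h')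
  set ρ : Fin m ⊕ Fin n ≃ Fin r := Equiv.ofBijective _ hφ with hρ
  set γ : Fin m ⊕ Fin n ≃ ↥c := Equiv.ofBijective _ hψ with hγ
  have entry : ∀ a b : Fin m ⊕ Fin n,
      A (Sum.elim (s₀.orderEmbOfFin rfl) ((s₀ᶜ).orderEmbOfFin hs) a)
        (Sum.elim (fun i => Fin.castAdd k (s₀.orderEmbOfFin rfl i))
          (fun j => Fin.natAdd r (t.orderEmbOfFin ht j)) b) = Q a b := by
    rintro (a | a) (b | b) <;>
      simp only [Sum.elim_inl, Sum.elim_inr, hA, Matrix.of_apply,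
        finSumFinEquiv_symm_apply_castAdd, finSumFinEquiv_symm_apply_natAdd,
        Matrix.fromCols_apply_inl, Matrix.fromCols_apply_inr, hQ,
        Matrix.fromBlocks_apply₁₁, Matrix.fromBlocks_apply₁₂,
        Matrix.fromBlocks_apply₂₁, Matrix.fromBlocks_apply₂₂]
    · simp [Matrix.one_apply, (s₀.orderEmbOfFin rfl).injective.eq_iff]
    · rfl
    · have h1 := Finset.orderEmbOfFin_mem s₀ᶜ hs a
      have h2 := Finset.orderEmbOfFin_mem s₀ rfl b
      have hne : (s₀ᶜ).orderEmbOfFin hs a ≠ s₀.orderEmbOfFin rfl b := by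
        intro hh; rw [hh] at h1; exact (Finset.mem_compl.mp h1) h2
      simp [Matrix.one_apply, hne]
    · rfl
  have hmat : (Matrix.of fun i j : Fin r => A i (c.orderEmbOfFin hc j)) =
      Q.submatrix ρ.symm ((c.orderIsoOfFin hc).toEquiv.trans γ.symm) := by
    ext i j
    simp only [Matrix.submatrix_apply, Matrix.of_apply, Equiv.trans_apply]
    rw [← entry (ρ.symm i) (γ.symm ((c.orderIsoOfFin hc).toEquiv j))]
    congr 1
    · exact (ρ.apply_symm_apply i).symm
    · have h2 := congrArg Subtype.val (γ.apply_symm_apply ((c.orderIsoOfFin hc).toEquiv j))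
      have h3 : ((c.orderIsoOfFin hc).toEquiv j : Fin (r + k)) = c.orderEmbOfFin hc j :=
        Finset.coe_orderIsoOfFin_apply c hc j
      rw [h3] at h2
      exact h2.symm
  rw [hmat, isUnit_det_submatrix_equiv, hdetQ]
lemma card_S0_add_card_T0 (r k : ℕ) (c : Finset (Fin (r + k))) :
    (S0 r k c).card + (T0 r k c).card = c.card := by
  classical
  have e : (↥(S0 r k c) ⊕ ↥(T0 r k c)) ≃ ↥c := by
    refine Equiv.ofBijective (fun x => Sum.elim
      (fun i : ↥(S0 r k c) => (⟨Fin.castAdd k i.1, by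
        have h1 := i.2; simp only [S0, Finset.mem_filter] at h1; exact h1.2⟩ : ↥c))
      (fun j : ↥(T0 r k c) => (⟨Fin.natAdd r j.1, by
        have h1 := j.2; simp only [T0, Finset.mem_filter] at h1; exact h1.2⟩ : ↥c)) x)
      ⟨?_, ?_⟩
    · rintro (⟨i, hi⟩ | ⟨j, hj⟩) (⟨i', hi'⟩ | ⟨j', hj'⟩) h <;>
        simp only [Sum.elim_inl, Sum.elim_inr, Subtype.mk.injEq] at h
    
      · simp only [Fin.ext_iff, Fin.coe_castAdd] at h
        simp [Subtype.ext_iff, Fin.ext_iff, h]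
      · exfalso; have hv := congrArg Fin.val h; have := i.isLt
        simp only [Fin.coe_castAdd, Fin.coe_natAdd] at hv; omega
      · exfalso; have hv := congrArg Fin.val h; have := i'.isLt
        simp only [Fin.coe_castAdd, Fin.coe_natAdd] at hv; omega
      · simp only [Fin.ext_iff, Fin.coe_natAdd] at h
        have hjj : (j : ℕ) = j' := by omega
        simp [Subtype.ext_iff, Fin.ext_iff, hjj]
    · rintro ⟨v, hv⟩
      obtain ⟨y, rfl⟩ := finSumFinEquiv.surjective v
      cases y with
      | inl i =>
          refine ⟨Sum.inl ⟨i, ?_⟩, ?_⟩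
          · simp only [finSumFinEquiv_apply_left] at hv; simp [S0, hv]
          · simp [finSumFinEquiv_apply_left]
      | inr j =>
          refine ⟨Sum.inr ⟨j, ?_⟩, ?_⟩
          · simp only [finSumFinEquiv_apply_right] at hv; simp [T0, hv]
          · simp [finSumFinEquiv_apply_right]
  have hcard := Fintype.card_congr e
  simpa [Fintype.card_coe] using hcard

lemma key2 (r k : ℕ) (M : Matrix (Fin r) (Fin k) ℚ)
    (A : Matrix (Fin r) (Fin (r + k)) ℚ)
    (hA : A = Matrix.of fun i j => (Matrix.fromCols 1 M) i (finSumFinEquiv.symm j))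
    (c : Finset (Fin (r + k))) (hc : c.card = r) :
    IsUnit (Matrix.det (Matrix.of fun i j : Fin r => A i (c.orderEmbOfFin hc j))) ↔
      IsInvSquareSubmatrix M ((S0 r k c)ᶜ) (T0 r k c) := by
  have ht : (T0 r k c).card = ((S0 r k c)ᶜ).card := by
    have h1 := card_S0_add_card_T0 r k c
    have h2 := Finset.card_add_card_compl (S0 r k c)
    rw [Fintype.card_fin] at h2
    omega
  constructor
  · intro h
    exact ⟨_, rfl, ht, (keyCore r k M A hA c hc rfl ht).mp h⟩
  · rintro ⟨n, hsn, htn, h⟩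
    subst hsn
    exact (keyCore r k M A hA c hc rfl htn).mpr h


/-- For `A = (I_r | M)`, the number of choices of `r` columns of `A` forming an invertible
`r × r` matrix equals the number of invertible square submatrices of `M`. -/
theorem stmt15 (r k : ℕ) (M : Matrix (Fin r) (Fin k) ℚ)
    (A : Matrix (Fin r) (Fin (r + k)) ℚ)
    (hA : A = Matrix.of fun i j => (Matrix.fromCols 1 M) i (finSumFinEquiv.symm j)) :
    {c : Finset (Fin (r + k)) | ∃ hc : c.card = r,
        IsUnit (Matrix.det (Matrix.of fun i j : Fin r => A i (c.orderEmbOfFin hc j)))}.ncard =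
      numInvSquareSubmatrices M := by
  classical
  have hinj : Function.Injective
      (fun c : Finset (Fin (r + k)) => (((S0 r k c)ᶜ), T0 r k c)) := by
    intro c c' h
    simp only [Prod.mk.injEq, compl_inj_iff] at h
    ext x
    obtain ⟨y, rfl⟩ := finSumFinEquiv.surjective x
    cases y with
    | inl i =>
        have h1 : (i ∈ S0 r k c) = (i ∈ S0 r k c') := by rw [h.1]
        simp only [S0, Finset.mem_filter, Finset.mem_univ, true_and] at h1
        simp [finSumFinEquiv_apply_left, h1]
    | inr j =>
        have h1 : (j ∈ T0 r k c) = (j ∈ T0 r k c') := by rw [h.2]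
        simp only [T0, Finset.mem_filter, Finset.mem_univ, true_and] at h1
        simp [finSumFinEquiv_apply_right, h1]
  have himg : (fun c : Finset (Fin (r + k)) => (((S0 r k c)ᶜ), T0 r k c)) ''
      {c : Finset (Fin (r + k)) | ∃ hc : c.card = r,
        IsUnit (Matrix.det (Matrix.of fun i j : Fin r => A i (c.orderEmbOfFin hc j)))} =
      {p : Finset (Fin r) × Finset (Fin k) | IsInvSquareSubmatrix M p.1 p.2} := by
    apply Set.eq_of_subset_of_subset
    · rintro ⟨s, t⟩ ⟨c, ⟨hc, hu⟩, heq⟩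
      cases heq
      exact (key2 r k M A hA c hc).mp hu
    · rintro ⟨s, t⟩ ⟨n, hsn, htn, hu⟩
      subst hsn
      set c : Finset (Fin (r + k)) :=
        (sᶜ.map (Fin.castAddOrderEmb k).toEmbedding) ∪
          (t.map (Fin.natAddOrderEmb r).toEmbedding) with hcdef
      have hmem1 : ∀ i : Fin r, (Fin.castAdd k i ∈ c ↔ i ∈ sᶜ) := by
        intro i
        simp only [hcdef, Finset.mem_union, Finset.mem_map,
          Fin.castAddOrderEmb_toEmbedding, Fin.natAddOrderEmb_toEmbedding,
          Function.Embedding.coeFn_mk]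
        constructor
        · rintro (⟨a, ha, hai⟩ | ⟨b, hb, hbi⟩)
          · obtain rfl : a = i := Fin.val_injective (by simpa [DFunLike.coe] using congrArg Fin.val hai)
            exact ha
          · exfalso
            have hv := congrArg Fin.val hbi
            have hlt := i.isLt
            simp only [DFunLike.coe, Fin.coe_castAdd, Fin.coe_natAdd] at hv
            omega
        · intro hi; exact Or.inl ⟨i, hi, rfl⟩
      have hmem2 : ∀ j : Fin k, (Fin.natAdd r j ∈ c ↔ j ∈ t) := by
        intro j
        simp only [hcdef, Finset.mem_union, Finset.mem_map,
          Fin.castAddOrderEmb_toEmbedding, Fin.natAddOrderEmb_toEmbedding,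
          Function.Embedding.coeFn_mk]
        constructor
        · rintro (⟨a, ha, hai⟩ | ⟨b, hb, hbi⟩)
          · exfalso
            have hv := congrArg Fin.val hai
            have hlt := a.isLt
            simp only [DFunLike.coe, Fin.coe_castAdd, Fin.coe_natAdd] at hv
            omega
          · obtain rfl : b = j := Fin.val_injective (by simpa [DFunLike.coe] using congrArg Fin.val hbi)
            exact hb
        · intro hj; exact Or.inr ⟨j, hj, rfl⟩
      have hS : S0 r k c = sᶜ := by
        ext i
        simp only [S0, Finset.mem_filter, Finset.mem_univ, true_and]
        exact hmem1 i
      have hT : T0 r k c = t := by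
        ext j
        simp only [T0, Finset.mem_filter, Finset.mem_univ, true_and]
        exact hmem2 j
      have hdisj : Disjoint (sᶜ.map (Fin.castAddOrderEmb k).toEmbedding)
          (t.map (Fin.natAddOrderEmb r).toEmbedding) := by
        rw [Finset.disjoint_left]
        intro x hx hx'
        simp only [Finset.mem_map, Fin.castAddOrderEmb_toEmbedding,
          Fin.natAddOrderEmb_toEmbedding, Function.Embedding.coeFn_mk] at hx hx'
        obtain ⟨a, _, rfl⟩ := hx
        obtain ⟨b, _, hb⟩ := hx'
        have hv := congrArg Fin.val hb
        have hlt := a.isLt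
        simp only [DFunLike.coe, Fin.coe_castAdd, Fin.coe_natAdd] at hv
        omega
      have hcard : c.card = r := by
        rw [hcdef, Finset.card_union_of_disjoint hdisj, Finset.card_map,
          Finset.card_map, Finset.card_compl, Fintype.card_fin]
        have hle := Finset.card_le_univ s
        simp only [Finset.card_univ, Fintype.card_fin] at hle
        have htn' : t.card = s.card := htn
        omega
      refine ⟨c, ⟨hcard, ?_⟩, ?_⟩
      · refine (key2 r k M A hA c hcard).mpr ?_
        rw [hS, compl_compl, hT]
        exact ⟨s.card, rfl, htn, hu⟩
      · simp only [hS, compl_compl, hT]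
  rw [numInvSquareSubmatrices, ← himg, Set.ncard_image_of_injOn hinj.injOn]
end
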